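/- Let {G^A_i} and {G^B_j} be orthogonal operator bases on ℂ^d (Tr(G† G') = d·δ, G_0 = I, G_i Hermitian traceless for i ≥ 1), C = [c_{ij}] a real (d²−1)×(d²−1) matrix, and S = ∑_{i,j=1}^{d^2-1} c_{ij} G^A_i ⊗ G^B_j. If a density matrix ρ on ℂ^d ⊗ ℂ^d satisfies |Tr(S ρ)| > (d−1)·‖C‖, where ‖C‖ is the operator norm of C, then ρ is not separable, i.e., ρ is not a finite convex combination of Kronecker products of density matrices. -/

import Mathlib

open Matrix
open Kronecker
open scoped BigOperators ComplexOrder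

/-- The operator norm (largest singular value) of a real square matrix,
realized as the norm of the induced continuous linear map on Euclidean space. -/
noncomputable def opNorm {n : ℕ} (C : Matrix (Fin n) (Fin n) ℝ) : ℝ :=
  ‖(Matrix.toEuclideanCLM (𝕜 := ℝ) C :
      EuclideanSpace ℝ (Fin n) →L[ℝ] EuclideanSpace ℝ (Fin n))‖

/-- A density matrix: Hermitian, positive semidefinite, trace one. -/
def IsDensityMatrix {n : Type*} [Fintype n] (ρ : Matrix n n ℂ) : Prop :=
  ρ.IsHermitian ∧ ρ.PosSemidef ∧ ρ.trace = 1

/-- A separable state on `ℂ^d ⊗ ℂ^d`: a finite convex combination of Kronecker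
products of density matrices. -/
def IsSeparableState {d : ℕ} (σ : Matrix (Fin d × Fin d) (Fin d × Fin d) ℂ) : Prop :=
  ∃ (m : ℕ) (p : Fin m → ℝ) (ρA ρB : Fin m → Matrix (Fin d) (Fin d) ℂ),
    (∀ k, 0 ≤ p k) ∧ (∑ k, p k = 1) ∧
    (∀ k, IsDensityMatrix (ρA k)) ∧ (∀ k, IsDensityMatrix (ρB k)) ∧
    σ = ∑ k, (p k : ℂ) • (ρA k ⊗ₖ ρB k)

/- ### Auxiliary lemmas -/

lemma trace_sq_le_one' {d : ℕ} (ρ : Matrix (Fin d) (Fin d) ℂ) (hpsd : ρ.PosSemidef)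
    (htr : ρ.trace = 1) : ∃ r : ℝ, (ρ * ρ).trace = (r : ℂ) ∧ r ≤ 1 := by
  classical
  have hH := hpsd.1
  set U : Matrix (Fin d) (Fin d) ℂ := (hH.eigenvectorUnitary : Matrix (Fin d) (Fin d) ℂ) with hUdef
  set D : Matrix (Fin d) (Fin d) ℂ := diagonal (RCLike.ofReal ∘ hH.eigenvalues) with hDdef
  have hspec : ρ = U * D * star U := hH.spectral_theorem
  have hU : star U * U = 1 := (Matrix.mem_unitaryGroup_iff').mp hH.eigenvectorUnitary.2
  have hsq : ρ * ρ = U * (D * D) * star U := by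
    rw [hspec]
    rw [show U * D * star U * (U * D * star U) = U * D * (star U * U) * D * star U by
      simp only [mul_assoc]]
    rw [hU]; simp only [mul_one, mul_assoc]
  have htr2 : (ρ * ρ).trace = (D * D).trace := by
    rw [hsq, Matrix.trace_mul_cycle, ← mul_assoc, hU, one_mul]
  have hDD : (D * D).trace = ((∑ i, hH.eigenvalues i ^ 2 : ℝ) : ℂ) := by
    simp only [hDdef, diagonal_mul_diagonal, trace_diagonal, Function.comp, Pi.mul_apply]
    push_cast; simp [sq]
  have htrD : ρ.trace = (D).trace := by
    rw [hspec, Matrix.trace_mul_cycle, hU, one_mul]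
  have htr1 : (∑ i, hH.eigenvalues i) = 1 := by
    have : ((∑ i, hH.eigenvalues i : ℝ) : ℂ) = 1 := by
      rw [← htr, htrD, hDdef, trace_diagonal]; push_cast; rfl
    exact_mod_cast this
  have hnn : ∀ i, 0 ≤ hH.eigenvalues i := fun i => hpsd.eigenvalues_nonneg i
  have hle1 : ∀ i, hH.eigenvalues i ≤ 1 := by
    intro i
    rw [← htr1]
    exact Finset.single_le_sum (fun j _ => hnn j) (Finset.mem_univ i)
  refine ⟨∑ i, hH.eigenvalues i ^ 2, htr2.trans hDD, ?_⟩
  calc ∑ i, hH.eigenvalues i ^ 2 ≤ ∑ i, hH.eigenvalues i := by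
        refine Finset.sum_le_sum fun i _ => ?_
        nlinarith [hnn i, hle1 i]
    _ = 1 := htr1

/-- Embedding of matrices into Euclidean space (Frobenius inner product). -/
noncomputable def matEmb {d : ℕ} (A : Matrix (Fin d) (Fin d) ℂ) :
    EuclideanSpace ℂ (Fin d × Fin d) :=
  (WithLp.equiv 2 _).symm (fun p : Fin d × Fin d => A p.1 p.2)

lemma matEmb_inner {d : ℕ} (A B : Matrix (Fin d) (Fin d) ℂ) :
    (inner ℂ (matEmb A) (matEmb B) : ℂ) = (Aᴴ * B).trace := by
  simp only [matEmb, PiLp.inner_apply, RCLike.inner_apply, WithLp.equiv_symm_apply, PiLp.toLp_apply,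
    Matrix.trace, Matrix.diag, Matrix.mul_apply, conjTranspose_apply]
  rw [Finset.sum_comm (γ := Fin d)]
  · rw [← Finset.sum_product']
    exact Finset.sum_congr Finset.univ_product_univ.symm fun x _ => by rw [mul_comm]; rfl

/-- Bessel's inequality for a Hilbert–Schmidt orthogonal family of matrices. -/
lemma matrix_bessel {d n : ℕ} (G : Fin (n + 1) → Matrix (Fin d) (Fin d) ℂ)
    (hG : ∀ k l, ((G k)ᴴ * G l).trace = if k = l then (d : ℂ) else 0)
    (hd : 0 < d)
    (A : Matrix (Fin d) (Fin d) ℂ) (r : ℝ) (hr : (Aᴴ * A).trace = (r : ℂ)) :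
    ∑ k, ‖((G k)ᴴ * A).trace‖ ^ 2 ≤ d * r := by
  classical
  set c : ℝ := (Real.sqrt d)⁻¹ with hc
  have hcpos : 0 < c := by positivity
  set v : Fin (n + 1) → EuclideanSpace ℂ (Fin d × Fin d) :=
    fun k => (c : ℂ) • matEmb (G k) with hv
  have hortho : Orthonormal ℂ v := by
    rw [orthonormal_iff_ite]
    intro k l
    rw [hv]
    simp only [inner_smul_left, inner_smul_right, matEmb_inner, hG k l]
    rw [Complex.conj_ofReal]
    by_cases h : k = l
    · simp only [h, if_pos rfl, if_true]
      have : (c : ℂ) * ((c : ℂ) * (d : ℂ)) = ((c * c * d : ℝ) : ℂ) := by push_cast; ring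
      rw [this]
      norm_cast
      rw [hc, ← mul_inv, Real.mul_self_sqrt (Nat.cast_nonneg d)]
      exact inv_mul_cancel₀ (by positivity)
    · simp [h]
  have hB := hortho.sum_inner_products_le (s := Finset.univ) (matEmb A)
  have hnorm : ‖matEmb A‖ ^ 2 = r := by
    have h1 : ‖matEmb A‖ ^ 2 = RCLike.re (inner ℂ (matEmb A) (matEmb A) : ℂ) :=
      InnerProductSpace.norm_sq_eq_re_inner (𝕜 := ℂ) (matEmb A)
    rw [h1, matEmb_inner, hr]
    simp
  have hterm : ∀ k, ‖(inner ℂ (v k) (matEmb A) : ℂ)‖ ^ 2 = c ^ 2 * ‖((G k)ᴴ * A).trace‖ ^ 2 := by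
    intro k
    rw [hv]
    simp only [inner_smul_left, matEmb_inner, norm_mul, Complex.conj_ofReal]
    rw [mul_pow]
    congr 1
    simp [abs_of_pos hcpos]
  rw [hnorm] at hB
  have hsum : ∑ k, ‖(inner ℂ (v k) (matEmb A) : ℂ)‖ ^ 2
      = c ^ 2 * ∑ k, ‖((G k)ᴴ * A).trace‖ ^ 2 := by
    rw [Finset.mul_sum]; exact Finset.sum_congr rfl fun k _ => hterm k
  rw [hsum] at hB
  have hc2 : c ^ 2 = (d : ℝ)⁻¹ := by
    rw [hc, sq, ← mul_inv, Real.mul_self_sqrt (by positivity)]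
  rw [hc2] at hB
  have hd' : (0:ℝ) < d := by exact_mod_cast hd
  calc ∑ k, ‖((G k)ᴴ * A).trace‖ ^ 2
      = d * ((d:ℝ)⁻¹ * ∑ k, ‖((G k)ᴴ * A).trace‖ ^ 2) := by field_simp
    _ ≤ d * r := by apply mul_le_mul_of_nonneg_left hB (le_of_lt hd')

lemma trace_herm_real {d : ℕ} {G ρ : Matrix (Fin d) (Fin d) ℂ}
    (hG : G.IsHermitian) (hρ : ρ.IsHermitian) :
    (G * ρ).trace = (((G * ρ).trace.re : ℝ) : ℂ) := by
  have h : (starRingEnd ℂ) ((G * ρ).trace) = (G * ρ).trace := by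
    have h1 : ((G * ρ)ᴴ).trace = star (G * ρ).trace := Matrix.trace_conjTranspose _
    have h2 : (G * ρ)ᴴ = ρ * G := by rw [conjTranspose_mul, hG.eq, hρ.eq]
    rw [h2, Matrix.trace_mul_comm] at h1
    exact h1.symm
  exact (Complex.conj_eq_iff_re.mp h).symm

lemma bilin_bound {n : ℕ} (C : Matrix (Fin n) (Fin n) ℝ) (a b : Fin n → ℝ) :
    |∑ i, ∑ j, a i * (C i j * b j)| ≤
      opNorm C * ‖(WithLp.equiv 2 _).symm a‖ *
        ‖((WithLp.equiv 2 _).symm b : EuclideanSpace ℝ (Fin n))‖ := by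
  set a' : EuclideanSpace ℝ (Fin n) := (WithLp.equiv 2 _).symm a
  set b' : EuclideanSpace ℝ (Fin n) := (WithLp.equiv 2 _).symm b
  have hmv : (Matrix.toEuclideanCLM (𝕜 := ℝ) C) b' = (WithLp.equiv 2 _).symm (C *ᵥ b) :=
    Matrix.toEuclideanCLM_toLp C b
  have hinner : (inner ℝ a' ((Matrix.toEuclideanCLM (𝕜 := ℝ) C) b') : ℝ)
      = ∑ i, ∑ j, a i * (C i j * b j) := by
    rw [hmv]
    simp only [PiLp.inner_apply, RCLike.inner_apply, WithLp.equiv_symm_apply, PiLp.toLp_apply, starRingEnd_apply,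
      star_trivial, Matrix.mulVec, dotProduct, Finset.mul_sum]
    exact Finset.sum_congr rfl fun i _ => by
      rw [Finset.sum_mul]; exact Finset.sum_congr rfl fun j _ => by change _ * a i = _; ring
  rw [← hinner]
  calc |(inner ℝ a' ((Matrix.toEuclideanCLM (𝕜 := ℝ) C) b') : ℝ)|
      ≤ ‖a'‖ * ‖(Matrix.toEuclideanCLM (𝕜 := ℝ) C) b'‖ := abs_real_inner_le_norm _ _
    _ ≤ ‖a'‖ * (opNorm C * ‖b'‖) := by
        apply mul_le_mul_of_nonneg_left (ContinuousLinearMap.le_opNorm _ _) (norm_nonneg _)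
    _ = opNorm C * ‖a'‖ * ‖b'‖ := by ring

/-- The vector of traceless-basis coefficients of a density matrix has squared
Euclidean norm at most `d - 1`. -/
lemma coeff_vec_bound {d n : ℕ} (hd : 0 < d)
    (G : Fin (n + 1) → Matrix (Fin d) (Fin d) ℂ)
    (hG : ∀ k l, ((G k)ᴴ * G l).trace = if k = l then (d : ℂ) else 0)
    (hG0 : G 0 = 1)
    (ρ : Matrix (Fin d) (Fin d) ℂ) (hρ : IsDensityMatrix ρ) :
    ∑ i : Fin n, ‖((G i.succ)ᴴ * ρ).trace‖ ^ 2 ≤ (d : ℝ) - 1 := by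
  obtain ⟨hherm, hpsd, htr⟩ := hρ
  obtain ⟨r, hr, hr1⟩ := trace_sq_le_one' ρ hpsd htr
  have hr' : (ρᴴ * ρ).trace = (r : ℂ) := by rw [hherm.eq]; exact hr
  have hB := matrix_bessel G hG hd ρ r hr'
  rw [Fin.sum_univ_succ] at hB
  have h0 : ‖((G 0)ᴴ * ρ).trace‖ ^ 2 = 1 := by
    rw [hG0]
    simp [htr]
  rw [h0] at hB
  have : (d : ℝ) * r ≤ (d : ℝ) * 1 := by
    apply mul_le_mul_of_nonneg_left hr1 (Nat.cast_nonneg d)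
  linarith

/-- Key bound for product states. -/
lemma product_state_bound {d n : ℕ} (hd : 0 < d)
    (GA GB : Fin (n + 1) → Matrix (Fin d) (Fin d) ℂ)
    (hGA : ∀ k l, ((GA k)ᴴ * GA l).trace = if k = l then (d : ℂ) else 0)
    (hGB : ∀ k l, ((GB k)ᴴ * GB l).trace = if k = l then (d : ℂ) else 0)
    (hGA0 : GA 0 = 1) (hGB0 : GB 0 = 1)
    (hGAherm : ∀ i : Fin n, (GA i.succ).IsHermitian)
    (hGBherm : ∀ i : Fin n, (GB i.succ).IsHermitian)
    (C : Matrix (Fin n) (Fin n) ℝ)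
    (S : Matrix (Fin d × Fin d) (Fin d × Fin d) ℂ)
    (hS : S = ∑ i : Fin n, ∑ j : Fin n, (C i j : ℂ) • (GA i.succ ⊗ₖ GB j.succ))
    (ρA ρB : Matrix (Fin d) (Fin d) ℂ)
    (hρA : IsDensityMatrix ρA) (hρB : IsDensityMatrix ρB) :
    ‖(S * (ρA ⊗ₖ ρB)).trace‖ ≤ ((d : ℝ) - 1) * opNorm C := by
  classical
  set a : Fin n → ℝ := fun i => (GA i.succ * ρA).trace.re with ha
  set b : Fin n → ℝ := fun j => (GB j.succ * ρB).trace.re with hb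
  have haR : ∀ i, (GA i.succ * ρA).trace = ((a i : ℝ) : ℂ) := fun i =>
    trace_herm_real (hGAherm i) hρA.1
  have hbR : ∀ j, (GB j.succ * ρB).trace = ((b j : ℝ) : ℂ) := fun j =>
    trace_herm_real (hGBherm j) hρB.1
  have htrace : (S * (ρA ⊗ₖ ρB)).trace
      = ((∑ i, ∑ j, a i * (C i j * b j) : ℝ) : ℂ) := by
    rw [hS]
    push_cast
    rw [Finset.sum_mul, trace_sum]
    refine Finset.sum_congr rfl fun i _ => ?_
    rw [Finset.sum_mul, trace_sum]
    refine Finset.sum_congr rfl fun j _ => ?_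
    rw [smul_mul_assoc, trace_smul, ← mul_kronecker_mul, trace_kronecker, haR i, hbR j,
      smul_eq_mul]
    ring
  have hnormtrace : ‖(S * (ρA ⊗ₖ ρB)).trace‖ = |∑ i, ∑ j, a i * (C i j * b j)| := by
    rw [htrace, Complex.norm_real, Real.norm_eq_abs]
  have hAle : ∑ i, a i ^ 2 ≤ (d : ℝ) - 1 := by
    refine le_trans (le_of_eq ?_) (coeff_vec_bound hd GA hGA hGA0 ρA hρA)
    refine Finset.sum_congr rfl fun i _ => ?_
    rw [(hGAherm i).eq, haR i, Complex.norm_real, Real.norm_eq_abs, sq_abs]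
  have hBle : ∑ j, b j ^ 2 ≤ (d : ℝ) - 1 := by
    refine le_trans (le_of_eq ?_) (coeff_vec_bound hd GB hGB hGB0 ρB hρB)
    refine Finset.sum_congr rfl fun j _ => ?_
    rw [(hGBherm j).eq, hbR j, Complex.norm_real, Real.norm_eq_abs, sq_abs]
  set a' : EuclideanSpace ℝ (Fin n) := (WithLp.equiv 2 _).symm a with ha'
  set b' : EuclideanSpace ℝ (Fin n) := (WithLp.equiv 2 _).symm b with hb'
  have hna : ‖a'‖ ^ 2 ≤ (d : ℝ) - 1 := by
    rw [ha', EuclideanSpace.norm_eq, Real.sq_sqrt (by positivity)]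
    simpa [Real.norm_eq_abs, sq_abs] using hAle
  have hnb : ‖b'‖ ^ 2 ≤ (d : ℝ) - 1 := by
    rw [hb', EuclideanSpace.norm_eq, Real.sq_sqrt (by positivity)]
    simpa [Real.norm_eq_abs, sq_abs] using hBle
  have hab : ‖a'‖ * ‖b'‖ ≤ (d : ℝ) - 1 := by
    nlinarith [sq_nonneg (‖a'‖ - ‖b'‖), norm_nonneg a', norm_nonneg b']
  have hop : (0 : ℝ) ≤ opNorm C := norm_nonneg _
  rw [hnormtrace]
  calc |∑ i, ∑ j, a i * (C i j * b j)| ≤ opNorm C * ‖a'‖ * ‖b'‖ := bilin_bound C a b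
    _ = opNorm C * (‖a'‖ * ‖b'‖) := by ring
    _ ≤ opNorm C * ((d : ℝ) - 1) := mul_le_mul_of_nonneg_left hab hop
    _ = ((d : ℝ) - 1) * opNorm C := by ring

/-- If a density matrix `ρ` on `ℂ^d ⊗ ℂ^d` satisfies
`|Tr(Sρ)| > (d−1)‖C‖` for `S = ∑_{i,j≥1} c_{ij} G^A_i ⊗ G^B_j`, then `ρ` is
not separable. -/
theorem stmt5 (d n : ℕ) (hn : n + 1 = d ^ 2)
    (GA GB : Fin (n + 1) → Matrix (Fin d) (Fin d) ℂ)
    (hGA : ∀ k l, ((GA k)ᴴ * GA l).trace = if k = l then (d : ℂ) else 0)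
    (hGB : ∀ k l, ((GB k)ᴴ * GB l).trace = if k = l then (d : ℂ) else 0)
    (hGA0 : GA 0 = 1) (hGB0 : GB 0 = 1)
    (hGAtr : ∀ i : Fin n, (GA i.succ).trace = 0)
    (hGBtr : ∀ i : Fin n, (GB i.succ).trace = 0)
    (hGAherm : ∀ i : Fin n, (GA i.succ).IsHermitian)
    (hGBherm : ∀ i : Fin n, (GB i.succ).IsHermitian)
    (C : Matrix (Fin n) (Fin n) ℝ)
    (S : Matrix (Fin d × Fin d) (Fin d × Fin d) ℂ)
    (hS : S = ∑ i : Fin n, ∑ j : Fin n, (C i j : ℂ) • (GA i.succ ⊗ₖ GB j.succ))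
    (ρ : Matrix (Fin d × Fin d) (Fin d × Fin d) ℂ) (hρ : IsDensityMatrix ρ)
    (hviol : ((d : ℝ) - 1) * opNorm C < ‖(S * ρ).trace‖) :
    ¬ IsSeparableState ρ := by
  have hd : 0 < d := by
    rcases Nat.eq_zero_or_pos d with h | h
    · exfalso; rw [h] at hn; simp at hn
    · exact h
  rintro ⟨m, p, ρA, ρB, hp0, hp1, hρA, hρB, hsep⟩
  have hbound : ∀ k, ‖(S * (ρA k ⊗ₖ ρB k)).trace‖ ≤ ((d : ℝ) - 1) * opNorm C := fun k =>
    product_state_bound hd GA GB hGA hGB hGA0 hGB0 hGAherm hGBherm C S hS _ _ (hρA k) (hρB k)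
  have hsplit : (S * ρ).trace = ∑ k, (p k : ℂ) * (S * (ρA k ⊗ₖ ρB k)).trace := by
    rw [hsep, Finset.mul_sum, trace_sum]
    exact Finset.sum_congr rfl fun k _ => by rw [mul_smul_comm, trace_smul, smul_eq_mul]
  have : ‖(S * ρ).trace‖ ≤ ((d : ℝ) - 1) * opNorm C := by
    rw [hsplit]
    calc ‖∑ k, (p k : ℂ) * (S * (ρA k ⊗ₖ ρB k)).trace‖
        ≤ ∑ k, ‖(p k : ℂ) * (S * (ρA k ⊗ₖ ρB k)).trace‖ := norm_sum_le _ _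
      _ ≤ ∑ k, p k * (((d : ℝ) - 1) * opNorm C) := by
          refine Finset.sum_le_sum fun k _ => ?_
          rw [norm_mul, Complex.norm_real, Real.norm_eq_abs, abs_of_nonneg (hp0 k)]
          exact mul_le_mul_of_nonneg_left (hbound k) (hp0 k)
      _ = (∑ k, p k) * (((d : ℝ) - 1) * opNorm C) := by rw [← Finset.sum_mul]
      _ = ((d : ℝ) - 1) * opNorm C := by rw [hp1, one_mul]
  linarith
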